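/- arXiv:2305.10978 — 4 statements merged into one kernel-verified Lean document; each statement's English description precedes it below -/
import Mathlib

section
/- For any two finite MDPs sharing the same state space S, action space A, reward function R bounded in [0, R_max], and discount factor γ ∈ (0,1), but with transition kernels P_m and P_n, and for any value function V with sup-norm at most R_max/(1-γ), the sup-norm distance between the Bellman optimality operators applied to V satisfies ‖T_m V − T_n V‖_∞ ≤ γ R_max κ_{m,n} / (1 − γ), where κ_{m,n} = max over policies π and states s of ∑_{s'} |P_m^π(s'|s) − P_n^π(s'|s)| and P^π(s'|s) = ∑_a π(a|s) P(s'|s,a). -/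
open Finset Filter

variable {S A : Type*}

/-- A stochastic policy: for each state, a probability distribution over actions. -/
def IsPolicy [Fintype A] (pi : S → A → ℝ) : Prop :=
  (∀ s a, 0 ≤ pi s a) ∧ ∀ s, ∑ a, pi s a = 1

/-- A transition kernel: for each state-action pair, a probability distribution over states. -/
def IsKernel [Fintype S] (P : S → A → S → ℝ) : Prop :=
  (∀ s a s', 0 ≤ P s a s') ∧ ∀ s a, ∑ s', P s a s' = 1

/-- The policy Bellman operator `T^π` for kernel `P`. -/
def Tpol [Fintype S] [Fintype A] (γ : ℝ) (R : S → A → ℝ) (P : S → A → S → ℝ)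
    (pi : S → A → ℝ) (V : S → ℝ) (s : S) : ℝ :=
  ∑ a, pi s a * (R s a + γ * ∑ s', P s a s' * V s')

/-- The Bellman optimality operator `T` for kernel `P`. -/
noncomputable def Topt [Fintype S] [Fintype A] [Nonempty A] (γ : ℝ) (R : S → A → ℝ)
    (P : S → A → S → ℝ) (V : S → ℝ) (s : S) : ℝ :=
  Finset.univ.sup' Finset.univ_nonempty fun a => R s a + γ * ∑ s', P s a s' * V s'

/-- Heterogeneity measure `κ_{m,n}`: the supremum over policies `π` and states `s` of the
ℓ¹-distance between the induced state transition kernels `P_m^π(·|s)` and `P_n^π(·|s)`. -/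
noncomputable def kappa [Fintype S] [Fintype A] (Pm Pn : S → A → S → ℝ) : ℝ :=
  sSup {x : ℝ | ∃ pi : S → A → ℝ, ∃ s : S, IsPolicy pi ∧
    x = ∑ s', |(∑ a, pi s a * Pm s a s') - ∑ a, pi s a * Pn s a s'|}

/-- Sup-norm of a value function on a finite state space. -/
noncomputable def supNorm [Fintype S] [Nonempty S] (V : S → ℝ) : ℝ := ⨆ s, |V s|

variable [Fintype S] [Fintype A] [Nonempty S] [Nonempty A]

theorem stmt0 (γ Rmax : ℝ) (hγ0 : 0 < γ) (hγ1 : γ < 1)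
    (R : S → A → ℝ) (hR : ∀ s a, 0 ≤ R s a ∧ R s a ≤ Rmax)
    (Pm Pn : S → A → S → ℝ) (hPm : IsKernel Pm) (hPn : IsKernel Pn)
    (V : S → ℝ) (hV : supNorm V ≤ Rmax / (1 - γ)) :
    supNorm (fun s => Topt γ R Pm V s - Topt γ R Pn V s) ≤
      γ * Rmax * kappa Pm Pn / (1 - γ) := by
  classical
  simp only [supNorm] at hV ⊢
  set K := {x : ℝ | ∃ pi : S → A → ℝ, ∃ s : S, IsPolicy pi ∧
    x = ∑ s', |(∑ a, pi s a * Pm s a s') - ∑ a, pi s a * Pn s a s'|} with hK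
  have hbdd : BddAbove K := by
    refine ⟨2, ?_⟩
    rintro x ⟨pi, s, ⟨hp0, hp1⟩, rfl⟩
    calc ∑ s', |(∑ a, pi s a * Pm s a s') - ∑ a, pi s a * Pn s a s'|
        ≤ ∑ s', ((∑ a, pi s a * Pm s a s') + ∑ a, pi s a * Pn s a s') := by
          refine Finset.sum_le_sum fun s' _ => ?_
          have h1 : (0:ℝ) ≤ ∑ a, pi s a * Pm s a s' :=
            Finset.sum_nonneg fun a _ => mul_nonneg (hp0 s a) (hPm.1 s a s')
          have h2 : (0:ℝ) ≤ ∑ a, pi s a * Pn s a s' :=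
            Finset.sum_nonneg fun a _ => mul_nonneg (hp0 s a) (hPn.1 s a s')
          rw [abs_sub_le_iff]; constructor <;> linarith
      _ = 2 := by
          rw [Finset.sum_add_distrib, Finset.sum_comm, Finset.sum_comm (γ := S)]
          simp only [← Finset.mul_sum, hPm.2, hPn.2, mul_one, hp1]
          norm_num
  have hmem : ∀ (a : A) (s : S),
      (∑ s', |Pm s a s' - Pn s a s'|) ∈ K := by
    intro a s
    have hdet : ∀ (P : S → A → S → ℝ) (s' : S),
        ∑ b, (if b = a then (1:ℝ) else 0) * P s b s' = P s a s' := by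
      intro P s'; simp [ite_mul]
    refine ⟨fun _ b => if b = a then 1 else 0, s,
      ⟨fun _ b => by dsimp only; split <;> norm_num, fun _ => by simp⟩, ?_⟩
    congr 1; funext s'; rw [hdet, hdet]
  have hκ : ∀ (a : A) (s : S), ∑ s', |Pm s a s' - Pn s a s'| ≤ kappa Pm Pn :=
    fun a s => le_csSup hbdd (hmem a s)
  have hκ0 : 0 ≤ kappa Pm Pn := by
    obtain ⟨a⟩ := ‹Nonempty A›; obtain ⟨s⟩ := ‹Nonempty S›
    exact le_trans (Finset.sum_nonneg fun s' _ => abs_nonneg _) (hκ a s)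
  have hM0 : (0:ℝ) ≤ Rmax / (1 - γ) := by
    obtain ⟨s⟩ := ‹Nonempty S›
    exact le_trans (le_trans (abs_nonneg (V s))
      (le_ciSup (f := fun s => |V s|) (Set.Finite.bddAbove (Set.finite_range _)) s)) hV
  have hVle : ∀ s, |V s| ≤ Rmax / (1 - γ) := fun s =>
    le_trans (le_ciSup (f := fun s => |V s|) (Set.Finite.bddAbove (Set.finite_range _)) s) hV
  have key : ∀ (s : S) (a : A),
      |(R s a + γ * ∑ s', Pm s a s' * V s') - (R s a + γ * ∑ s', Pn s a s' * V s')|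
        ≤ γ * Rmax * kappa Pm Pn / (1 - γ) := by
    intro s a
    have h1 : |(R s a + γ * ∑ s', Pm s a s' * V s') - (R s a + γ * ∑ s', Pn s a s' * V s')|
        = γ * |∑ s', (Pm s a s' - Pn s a s') * V s'| := by
      have e2 : ∑ s', (Pm s a s' - Pn s a s') * V s'
          = (∑ s', Pm s a s' * V s') - ∑ s', Pn s a s' * V s' := by
        rw [← Finset.sum_sub_distrib]
        exact Finset.sum_congr rfl fun s' _ => by ring
      have e : (R s a + γ * ∑ s', Pm s a s' * V s') - (R s a + γ * ∑ s', Pn s a s' * V s')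
          = γ * ∑ s', (Pm s a s' - Pn s a s') * V s' := by rw [e2]; ring
      rw [e, abs_mul, abs_of_pos hγ0]
    rw [h1]
    have h2 : |∑ s', (Pm s a s' - Pn s a s') * V s'|
        ≤ (∑ s', |Pm s a s' - Pn s a s'|) * (Rmax / (1 - γ)) := by
      calc |∑ s', (Pm s a s' - Pn s a s') * V s'|
          ≤ ∑ s', |(Pm s a s' - Pn s a s') * V s'| := Finset.abs_sum_le_sum_abs _ _
        _ ≤ ∑ s', |Pm s a s' - Pn s a s'| * (Rmax / (1 - γ)) := by
            refine Finset.sum_le_sum fun s' _ => ?_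
            rw [abs_mul]
            exact mul_le_mul_of_nonneg_left (hVle s') (abs_nonneg _)
        _ = _ := by rw [← Finset.sum_mul]
    have h3 : (∑ s', |Pm s a s' - Pn s a s'|) * (Rmax / (1 - γ))
        ≤ kappa Pm Pn * (Rmax / (1 - γ)) :=
      mul_le_mul_of_nonneg_right (hκ a s) hM0
    calc γ * |∑ s', (Pm s a s' - Pn s a s') * V s'|
        ≤ γ * (kappa Pm Pn * (Rmax / (1 - γ))) :=
          mul_le_mul_of_nonneg_left (le_trans h2 h3) hγ0.le
      _ = γ * Rmax * kappa Pm Pn / (1 - γ) := by ring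
  have main : ∀ s : S, |Topt γ R Pm V s - Topt γ R Pn V s|
      ≤ γ * Rmax * kappa Pm Pn / (1 - γ) := by
    intro s
    set C := γ * Rmax * kappa Pm Pn / (1 - γ) with hC
    rw [abs_sub_le_iff]
    constructor
    · rw [sub_le_iff_le_add, Topt]
      refine Finset.sup'_le _ _ fun a _ => ?_
      have h := key s a
      rw [abs_sub_le_iff] at h
      calc R s a + γ * ∑ s', Pm s a s' * V s'
          ≤ C + (R s a + γ * ∑ s', Pn s a s' * V s') := by linarith [h.1]
        _ ≤ C + Topt γ R Pn V s := by
            simp only [Topt]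
            have := Finset.le_sup' (fun a => R s a + γ * ∑ s', Pn s a s' * V s')
              (Finset.mem_univ a)
            linarith
    · rw [sub_le_iff_le_add, Topt]
      refine Finset.sup'_le _ _ fun a _ => ?_
      have h := key s a
      rw [abs_sub_le_iff] at h
      calc R s a + γ * ∑ s', Pn s a s' * V s'
          ≤ C + (R s a + γ * ∑ s', Pm s a s' * V s') := by linarith [h.2]
        _ ≤ C + Topt γ R Pm V s := by
            simp only [Topt]
            have := Finset.le_sup' (fun a => R s a + γ * ∑ s', Pm s a s' * V s')
              (Finset.mem_univ a)
            linarith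
  exact ciSup_le main
end

section
/- For any finite MDP among N MDPs sharing S, A, R ∈ [0, R_max], discount γ, and any value function V with ‖V‖_∞ ≤ R_max/(1−γ), the Bellman optimality operator T_n of the n-th MDP and the Bellman optimality operator T_I of the imaginary MDP (whose transition kernel is the weighted average P̄ = ∑_j q_j P_j with weights q_j ≥ 0 summing to 1) satisfy ‖T_I V − T_n V‖_∞ ≤ γ R_max κ_{n,I} / (1 − γ), where κ_{n,I} = max_{π,s} ∑_{s'} |P_n^π(s'|s) − ∑_j q_j P_j^π(s'|s)|. -/
open Finset Filter

variable {S A : Type*}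

variable [Fintype S] [Fintype A] [Nonempty S] [Nonempty A]

lemma abs_sup'_sub_sup'_le {α : Type*} (t : Finset α) (ht : t.Nonempty) (f g : α → ℝ)
    (c : ℝ) (h : ∀ a ∈ t, |f a - g a| ≤ c) : |t.sup' ht f - t.sup' ht g| ≤ c := by
  rw [abs_sub_le_iff]
  constructor <;> rw [sub_le_iff_le_add] <;> apply Finset.sup'_le <;> intro a ha
  · have := (abs_sub_le_iff.mp (h a ha)).1
    have h2 := Finset.le_sup' g ha
    linarith
  · have := (abs_sub_le_iff.mp (h a ha)).2
    have h2 := Finset.le_sup' f ha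
    linarith

theorem stmt2 (N : ℕ) (γ Rmax : ℝ) (hγ0 : 0 < γ) (hγ1 : γ < 1)
    (R : S → A → ℝ) (hR : ∀ s a, 0 ≤ R s a ∧ R s a ≤ Rmax)
    (q : Fin N → ℝ) (hq0 : ∀ n, 0 ≤ q n) (hq1 : ∑ n, q n = 1)
    (P : Fin N → S → A → S → ℝ) (hP : ∀ n, IsKernel (P n))
    (Pbar : S → A → S → ℝ) (hPbar : ∀ s a s', Pbar s a s' = ∑ j, q j * P j s a s')
    (n : Fin N)
    (V : S → ℝ) (hV : supNorm V ≤ Rmax / (1 - γ)) :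
    supNorm (fun s => Topt γ R Pbar V s - Topt γ R (P n) V s) ≤
      γ * Rmax * kappa (P n) Pbar / (1 - γ) := by
  classical
  have hγd : (0:ℝ) < 1 - γ := by linarith
  -- Pbar is a kernel
  have hPb0 : ∀ s a s', 0 ≤ Pbar s a s' := by
    intro s a s'; rw [hPbar]
    exact Finset.sum_nonneg fun j _ => mul_nonneg (hq0 j) ((hP j).1 s a s')
  have hPb1 : ∀ s a, ∑ s', Pbar s a s' = 1 := by
    intro s a
    simp only [hPbar]
    rw [Finset.sum_comm]
    calc ∑ j, ∑ s', q j * P j s a s' = ∑ j, q j * ∑ s', P j s a s' := by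
          simp [Finset.mul_sum]
      _ = 1 := by simp only [(hP _).2 s a, mul_one, hq1]
  -- sup norm bounds
  have hVb : ∀ s, |V s| ≤ supNorm V := fun s =>
    le_ciSup (f := fun s => |V s|) (Set.Finite.bddAbove (Set.finite_range _)) s
  have hVnn : 0 ≤ supNorm V := le_trans (abs_nonneg _) (hVb (Classical.arbitrary S))
  -- kappa set bounded above
  have hbdd : BddAbove {x : ℝ | ∃ pi : S → A → ℝ, ∃ s : S, IsPolicy pi ∧
      x = ∑ s', |(∑ a, pi s a * P n s a s') - ∑ a, pi s a * Pbar s a s'|} := by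
    refine ⟨2, ?_⟩
    rintro x ⟨pi, s, hpi, rfl⟩
    have h1 : ∀ (Q : S → A → S → ℝ), (∀ s a s', 0 ≤ Q s a s') → (∀ s a, ∑ s', Q s a s' = 1) →
        ∑ s', ∑ a, pi s a * Q s a s' = 1 := by
      intro Q hQ0 hQ1
      rw [Finset.sum_comm]
      calc ∑ a, ∑ s', pi s a * Q s a s' = ∑ a, pi s a * ∑ s', Q s a s' := by
            simp [Finset.mul_sum]
        _ = 1 := by simp only [hQ1, mul_one, hpi.2 s]
    calc ∑ s', |(∑ a, pi s a * P n s a s') - ∑ a, pi s a * Pbar s a s'|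
        ≤ ∑ s', ((∑ a, pi s a * P n s a s') + ∑ a, pi s a * Pbar s a s') := by
          refine Finset.sum_le_sum fun s' _ => ?_
          refine (abs_sub _ _).trans ?_
          rw [abs_of_nonneg (Finset.sum_nonneg fun a _ => mul_nonneg (hpi.1 s a) ((hP n).1 s a s')),
            abs_of_nonneg (Finset.sum_nonneg fun a _ => mul_nonneg (hpi.1 s a) (hPb0 s a s'))]
      _ = 2 := by
          rw [Finset.sum_add_distrib, h1 (P n) (hP n).1 (hP n).2, h1 Pbar hPb0 hPb1]; norm_num
  -- deterministic policy: each (s,a) l1-distance is ≤ kappa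
  have hDle : ∀ s a, (∑ s', |P n s a s' - Pbar s a s'|) ≤ kappa (P n) Pbar := by
    intro s a
    apply le_csSup hbdd
    refine ⟨fun _ b => if b = a then 1 else 0, s, ⟨fun s' b => ?_, fun s' => by simp⟩, ?_⟩
    · dsimp only; split <;> norm_num
    · simp [ite_mul]
  have hκ0 : 0 ≤ kappa (P n) Pbar :=
    le_trans (Finset.sum_nonneg fun s' _ => abs_nonneg _)
      (hDle (Classical.arbitrary S) (Classical.arbitrary A))
  -- pointwise bound
  have key : ∀ s, |Topt γ R Pbar V s - Topt γ R (P n) V s| ≤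
      γ * Rmax * kappa (P n) Pbar / (1 - γ) := by
    intro s
    unfold Topt
    apply abs_sup'_sub_sup'_le
    intro a _
    have hsum : ∑ s', (Pbar s a s' - P n s a s') * V s' =
        (∑ s', Pbar s a s' * V s') - ∑ s', P n s a s' * V s' := by
      rw [← Finset.sum_sub_distrib]
      exact Finset.sum_congr rfl fun s' _ => by ring
    have heq : (R s a + γ * ∑ s', Pbar s a s' * V s') - (R s a + γ * ∑ s', P n s a s' * V s')
        = γ * ∑ s', (Pbar s a s' - P n s a s') * V s' := by rw [hsum]; ring
    rw [heq, abs_mul, abs_of_pos hγ0]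
    have h2 : |∑ s', (Pbar s a s' - P n s a s') * V s'| ≤ supNorm V * ∑ s', |P n s a s' - Pbar s a s'| := by
      refine (Finset.abs_sum_le_sum_abs _ _).trans ?_
      rw [Finset.mul_sum]
      refine Finset.sum_le_sum fun s' _ => ?_
      calc |(Pbar s a s' - P n s a s') * V s'|
          = |P n s a s' - Pbar s a s'| * |V s'| := by rw [abs_mul, abs_sub_comm]
        _ ≤ |P n s a s' - Pbar s a s'| * supNorm V :=
            mul_le_mul_of_nonneg_left (hVb s') (abs_nonneg _)
        _ = supNorm V * |P n s a s' - Pbar s a s'| := mul_comm _ _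
    calc γ * |∑ s', (Pbar s a s' - P n s a s') * V s'|
        ≤ γ * (supNorm V * ∑ s', |P n s a s' - Pbar s a s'|) :=
          mul_le_mul_of_nonneg_left h2 hγ0.le
      _ ≤ γ * (Rmax / (1 - γ) * kappa (P n) Pbar) := by
          refine mul_le_mul_of_nonneg_left ?_ hγ0.le
          refine mul_le_mul hV (hDle s a) (Finset.sum_nonneg fun _ _ => abs_nonneg _) ?_
          exact le_trans hVnn hV
      _ = γ * Rmax * kappa (P n) Pbar / (1 - γ) := by ring
  exact ciSup_le key
end

section
/- For N finite MDPs sharing S, A, R ∈ [0, R_max], γ ∈ (0,1), weights q_n summing to 1, and for any policy π: ‖V̄^π − V^π_I‖_∞ ≤ γ R_max κ_1 / (1 − γ)², where V̄^π = ∑_n q_n V^π_n, V^π_I is the value function of π in the imaginary MDP with kernel P̄ = ∑_n q_n P_n, and κ_1 = ∑_n q_n κ_{n,I} with κ_{n,I} = max_{π',s} ∑_{s'} |P_n^{π'}(s'|s) − P̄^{π'}(s'|s)|. -/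
open Finset Filter

variable {S A : Type*}

variable [Fintype S] [Fintype A] [Nonempty S] [Nonempty A]

private lemma supNorm_le'' {V : S → ℝ} {c : ℝ} (h : ∀ s, |V s| ≤ c) : supNorm V ≤ c :=
  ciSup_le h

private lemma le_supNorm'' (V : S → ℝ) (s : S) : |V s| ≤ supNorm V :=
  le_ciSup (Set.Finite.bddAbove (Set.finite_range fun s => |V s|)) s

private lemma supNorm_nonneg'' (V : S → ℝ) : 0 ≤ supNorm V :=
  le_trans (abs_nonneg _) (le_supNorm'' V (Classical.arbitrary S))

theorem stmt6 (N : ℕ) (γ Rmax : ℝ) (hγ0 : 0 < γ) (hγ1 : γ < 1)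
    (R : S → A → ℝ) (hR : ∀ s a, 0 ≤ R s a ∧ R s a ≤ Rmax)
    (q : Fin N → ℝ) (hq0 : ∀ n, 0 ≤ q n) (hq1 : ∑ n, q n = 1)
    (P : Fin N → S → A → S → ℝ) (hP : ∀ n, IsKernel (P n))
    (Pbar : S → A → S → ℝ) (hPbar : ∀ s a s', Pbar s a s' = ∑ j, q j * P j s a s')
    (pi : S → A → ℝ) (hpi : IsPolicy pi)
    (Vn : Fin N → S → ℝ) (hVn : ∀ n s, Vn n s = Tpol γ R (P n) pi (Vn n) s)
    (VI : S → ℝ) (hVI : ∀ s, VI s = Tpol γ R Pbar pi VI s) :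
    supNorm (fun s => (∑ n, q n * Vn n s) - VI s) ≤
      γ * Rmax * (∑ n, q n * kappa (P n) Pbar) / (1 - γ) ^ 2 := by

  classical
  obtain ⟨hpi0, hpi1⟩ := hpi
  have hγ' : 0 < 1 - γ := by linarith
  -- Pbar is a kernel
  have hPb0 : ∀ s a s', 0 ≤ Pbar s a s' := fun s a s' => by
    rw [hPbar]; exact Finset.sum_nonneg fun j _ => mul_nonneg (hq0 j) ((hP j).1 s a s')
  have hPb1 : ∀ s a, ∑ s', Pbar s a s' = 1 := by
    intro s a
    simp only [hPbar]
    rw [Finset.sum_comm]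
    calc ∑ j, ∑ s', q j * P j s a s' = ∑ j, q j * ∑ s', P j s a s' := by
          simp [Finset.mul_sum]
      _ = 1 := by
          have : ∀ j : Fin N, q j * ∑ s', P j s a s' = q j := fun j => by
            rw [(hP j).2 s a, mul_one]
          rw [Finset.sum_congr rfl fun j _ => this j, hq1]
  have hRmax : 0 ≤ Rmax :=
    le_trans (hR (Classical.arbitrary S) (Classical.arbitrary A)).1
      (hR (Classical.arbitrary S) (Classical.arbitrary A)).2
  set M := supNorm VI with hMdef
  have hMnn : 0 ≤ M := supNorm_nonneg'' VI
  -- bound on ‖VI‖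
  have hMstep : M ≤ Rmax + γ * M := by
    apply supNorm_le''
    intro s
    rw [hVI s]
    unfold Tpol
    calc |∑ a, pi s a * (R s a + γ * ∑ s', Pbar s a s' * VI s')|
        ≤ ∑ a, |pi s a * (R s a + γ * ∑ s', Pbar s a s' * VI s')| :=
          Finset.abs_sum_le_sum_abs _ _
      _ ≤ ∑ a, pi s a * (Rmax + γ * M) := by
          apply Finset.sum_le_sum
          intro a _
          rw [abs_mul, abs_of_nonneg (hpi0 s a)]
          apply mul_le_mul_of_nonneg_left _ (hpi0 s a)
          have hPV : |∑ s', Pbar s a s' * VI s'| ≤ M := by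
            calc |∑ s', Pbar s a s' * VI s'| ≤ ∑ s', |Pbar s a s' * VI s'| :=
                  Finset.abs_sum_le_sum_abs _ _
              _ ≤ ∑ s', Pbar s a s' * M := by
                  apply Finset.sum_le_sum; intro s' _
                  rw [abs_mul, abs_of_nonneg (hPb0 s a s')]
                  exact mul_le_mul_of_nonneg_left (le_supNorm'' VI s') (hPb0 s a s')
              _ = M := by rw [← Finset.sum_mul, hPb1 s a, one_mul]
          calc |R s a + γ * ∑ s', Pbar s a s' * VI s'|
              ≤ |R s a| + |γ * ∑ s', Pbar s a s' * VI s'| := abs_add_le _ _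
            _ ≤ Rmax + γ * M := by
                rw [abs_mul, abs_of_nonneg hγ0.le, abs_of_nonneg (hR s a).1]
                have := mul_le_mul_of_nonneg_left hPV hγ0.le
                linarith [(hR s a).2]
      _ = Rmax + γ * M := by rw [← Finset.sum_mul, hpi1 s, one_mul]
  have hMle : M ≤ Rmax / (1 - γ) := by
    rw [le_div_iff₀ hγ']; nlinarith
  -- kappa facts
  have hbdd : ∀ n : Fin N, BddAbove {x : ℝ | ∃ pi' : S → A → ℝ, ∃ s : S, IsPolicy pi' ∧
      x = ∑ s', |(∑ a, pi' s a * P n s a s') - ∑ a, pi' s a * Pbar s a s'|} := by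
    intro n
    refine ⟨2, ?_⟩
    rintro x ⟨pi', s, hpi', rfl⟩
    have key1 : ∑ s', ∑ a, pi' s a * P n s a s' = 1 := by
      rw [Finset.sum_comm]
      calc ∑ a, ∑ s', pi' s a * P n s a s' = ∑ a, pi' s a * ∑ s', P n s a s' := by
            simp [Finset.mul_sum]
        _ = 1 := by
            have : ∀ a : A, pi' s a * ∑ s', P n s a s' = pi' s a := fun a => by
              rw [(hP n).2 s a, mul_one]
            rw [Finset.sum_congr rfl fun a _ => this a, hpi'.2 s]
    have key2 : ∑ s', ∑ a, pi' s a * Pbar s a s' = 1 := by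
      rw [Finset.sum_comm]
      calc ∑ a, ∑ s', pi' s a * Pbar s a s' = ∑ a, pi' s a * ∑ s', Pbar s a s' := by
            simp [Finset.mul_sum]
        _ = 1 := by
            have : ∀ a : A, pi' s a * ∑ s', Pbar s a s' = pi' s a := fun a => by
              rw [hPb1 s a, mul_one]
            rw [Finset.sum_congr rfl fun a _ => this a, hpi'.2 s]
    calc ∑ s', |(∑ a, pi' s a * P n s a s') - ∑ a, pi' s a * Pbar s a s'|
        ≤ ∑ s', ((∑ a, pi' s a * P n s a s') + ∑ a, pi' s a * Pbar s a s') := by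
          apply Finset.sum_le_sum
          intro s' _
          have h1 : 0 ≤ ∑ a, pi' s a * P n s a s' :=
            Finset.sum_nonneg fun a _ => mul_nonneg (hpi'.1 s a) ((hP n).1 s a s')
          have h2 : 0 ≤ ∑ a, pi' s a * Pbar s a s' :=
            Finset.sum_nonneg fun a _ => mul_nonneg (hpi'.1 s a) (hPb0 s a s')
          calc |(∑ a, pi' s a * P n s a s') - ∑ a, pi' s a * Pbar s a s'|
              ≤ |∑ a, pi' s a * P n s a s'| + |∑ a, pi' s a * Pbar s a s'| := by
                rw [sub_eq_add_neg]
                exact (abs_add_le _ _).trans (by rw [abs_neg])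
            _ = (∑ a, pi' s a * P n s a s') + ∑ a, pi' s a * Pbar s a s' := by
                rw [abs_of_nonneg h1, abs_of_nonneg h2]
      _ = 2 := by rw [Finset.sum_add_distrib, key1, key2]; norm_num
  have hmem : ∀ (n : Fin N) (s : S),
      (∑ s', |(∑ a, pi s a * P n s a s') - ∑ a, pi s a * Pbar s a s'|) ≤ kappa (P n) Pbar :=
    fun n s => le_csSup (hbdd n) ⟨pi, s, ⟨hpi0, hpi1⟩, rfl⟩
  have hκ0 : ∀ n : Fin N, 0 ≤ kappa (P n) Pbar := fun n =>
    le_trans (Finset.sum_nonneg fun _ _ => abs_nonneg _) (hmem n (Classical.arbitrary S))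
  -- bound on each ‖Vn - VI‖
  have hDn : ∀ n : Fin N, supNorm (fun s => Vn n s - VI s) ≤
      γ * (M * kappa (P n) Pbar) / (1 - γ) := by
    intro n
    set D := supNorm (fun s => Vn n s - VI s) with hDdef
    have hDabs : ∀ s, |Vn n s - VI s| ≤ D := fun s => le_supNorm'' (fun s => Vn n s - VI s) s
    have hDstep : D ≤ γ * (M * kappa (P n) Pbar) + γ * D := by
      apply supNorm_le''
      intro s
      have lhs_eq : Tpol γ R (P n) pi (Vn n) s - Tpol γ R Pbar pi VI s
          = γ * ∑ s', ((∑ a, pi s a * P n s a s') * Vn n s'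
              - (∑ a, pi s a * Pbar s a s') * VI s') := by
        unfold Tpol
        rw [← Finset.sum_sub_distrib]
        have hper : ∀ a, pi s a * (R s a + γ * ∑ s', P n s a s' * Vn n s')
            - pi s a * (R s a + γ * ∑ s', Pbar s a s' * VI s')
            = γ * ∑ s', (pi s a * (P n s a s' * Vn n s') - pi s a * (Pbar s a s' * VI s')) := by
          intro a
          rw [Finset.sum_sub_distrib, ← Finset.mul_sum, ← Finset.mul_sum]
          ring
        rw [Finset.sum_congr rfl fun a _ => hper a, ← Finset.mul_sum, Finset.sum_comm]
        congr 1
        apply Finset.sum_congr rfl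
        intro s' _
        rw [Finset.sum_sub_distrib, Finset.sum_mul, Finset.sum_mul]
        congr 1
        · exact Finset.sum_congr rfl fun a _ => (mul_assoc _ _ _).symm
        · exact Finset.sum_congr rfl fun a _ => (mul_assoc _ _ _).symm
      have key : Vn n s - VI s =
          γ * (∑ s', ((∑ a, pi s a * P n s a s') - ∑ a, pi s a * Pbar s a s') * VI s')
          + γ * ∑ s', (∑ a, pi s a * P n s a s') * (Vn n s' - VI s') := by
        rw [hVn n s, hVI s, lhs_eq, ← mul_add, ← Finset.sum_add_distrib]
        congr 1
        apply Finset.sum_congr rfl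
        intro s' _
        ring
      rw [key]
      have h1 : |∑ s', ((∑ a, pi s a * P n s a s') - ∑ a, pi s a * Pbar s a s') * VI s'|
          ≤ M * kappa (P n) Pbar := by
        calc |∑ s', ((∑ a, pi s a * P n s a s') - ∑ a, pi s a * Pbar s a s') * VI s'|
            ≤ ∑ s', |((∑ a, pi s a * P n s a s') - ∑ a, pi s a * Pbar s a s') * VI s'| :=
              Finset.abs_sum_le_sum_abs _ _
          _ ≤ ∑ s', |(∑ a, pi s a * P n s a s') - ∑ a, pi s a * Pbar s a s'| * M := by
              apply Finset.sum_le_sum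
              intro s' _
              rw [abs_mul]
              exact mul_le_mul_of_nonneg_left (le_supNorm'' VI s') (abs_nonneg _)
          _ = (∑ s', |(∑ a, pi s a * P n s a s') - ∑ a, pi s a * Pbar s a s'|) * M :=
              (Finset.sum_mul _ _ _).symm
          _ ≤ kappa (P n) Pbar * M := mul_le_mul_of_nonneg_right (hmem n s) hMnn
          _ = M * kappa (P n) Pbar := mul_comm _ _
      have h2 : |∑ s', (∑ a, pi s a * P n s a s') * (Vn n s' - VI s')| ≤ D := by
        have hsum1 : ∑ s', ∑ a, pi s a * P n s a s' = 1 := by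
          rw [Finset.sum_comm]
          calc ∑ a, ∑ s', pi s a * P n s a s' = ∑ a, pi s a * ∑ s', P n s a s' := by
                simp [Finset.mul_sum]
            _ = 1 := by
                have : ∀ a : A, pi s a * ∑ s', P n s a s' = pi s a := fun a => by
                  rw [(hP n).2 s a, mul_one]
                rw [Finset.sum_congr rfl fun a _ => this a, hpi1 s]
        calc |∑ s', (∑ a, pi s a * P n s a s') * (Vn n s' - VI s')|
            ≤ ∑ s', |(∑ a, pi s a * P n s a s') * (Vn n s' - VI s')| :=
              Finset.abs_sum_le_sum_abs _ _
          _ ≤ ∑ s', (∑ a, pi s a * P n s a s') * D := by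
              apply Finset.sum_le_sum
              intro s' _
              have hnn : 0 ≤ ∑ a, pi s a * P n s a s' :=
                Finset.sum_nonneg fun a _ => mul_nonneg (hpi0 s a) ((hP n).1 s a s')
              rw [abs_mul, abs_of_nonneg hnn]
              exact mul_le_mul_of_nonneg_left (hDabs s') hnn
          _ = D := by rw [← Finset.sum_mul, hsum1, one_mul]
      calc |γ * (∑ s', ((∑ a, pi s a * P n s a s') - ∑ a, pi s a * Pbar s a s') * VI s')
          + γ * ∑ s', (∑ a, pi s a * P n s a s') * (Vn n s' - VI s')|
          ≤ |γ * (∑ s', ((∑ a, pi s a * P n s a s') - ∑ a, pi s a * Pbar s a s') * VI s')|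
            + |γ * ∑ s', (∑ a, pi s a * P n s a s') * (Vn n s' - VI s')| := abs_add_le _ _
        _ ≤ γ * (M * kappa (P n) Pbar) + γ * D := by
            rw [abs_mul, abs_mul, abs_of_nonneg hγ0.le]
            exact add_le_add (mul_le_mul_of_nonneg_left h1 hγ0.le)
              (mul_le_mul_of_nonneg_left h2 hγ0.le)
    rw [le_div_iff₀ hγ']
    nlinarith
  -- combine
  have final1 : supNorm (fun s => (∑ n, q n * Vn n s) - VI s)
      ≤ ∑ n, q n * (γ * (M * kappa (P n) Pbar) / (1 - γ)) := by
    apply supNorm_le''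
    intro s
    have hsplit : (∑ n, q n * Vn n s) - VI s = ∑ n, q n * (Vn n s - VI s) := by
      have : ∑ n, q n * (Vn n s - VI s) = (∑ n, q n * Vn n s) - (∑ n, q n) * VI s := by
        rw [Finset.sum_mul, ← Finset.sum_sub_distrib]
        exact Finset.sum_congr rfl fun n _ => by ring
      rw [this, hq1, one_mul]
    rw [hsplit]
    calc |∑ n, q n * (Vn n s - VI s)| ≤ ∑ n, |q n * (Vn n s - VI s)| :=
          Finset.abs_sum_le_sum_abs _ _
      _ ≤ ∑ n, q n * (γ * (M * kappa (P n) Pbar) / (1 - γ)) := by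
          apply Finset.sum_le_sum
          intro n _
          rw [abs_mul, abs_of_nonneg (hq0 n)]
          exact mul_le_mul_of_nonneg_left
            ((le_supNorm'' (fun s => Vn n s - VI s) s).trans (hDn n)) (hq0 n)
  refine final1.trans ?_
  calc ∑ n, q n * (γ * (M * kappa (P n) Pbar) / (1 - γ))
      ≤ ∑ n, γ * Rmax * (q n * kappa (P n) Pbar) / (1 - γ) ^ 2 := by
        apply Finset.sum_le_sum
        intro n _
        have hκ := hκ0 n
        have heq : γ * Rmax * (q n * kappa (P n) Pbar) / (1 - γ) ^ 2
            = q n * (γ * ((Rmax / (1 - γ)) * kappa (P n) Pbar) / (1 - γ)) := by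
          field_simp
        rw [heq]
        apply mul_le_mul_of_nonneg_left _ (hq0 n)
        apply div_le_div_of_nonneg_right ?_ hγ'.le
        exact mul_le_mul_of_nonneg_left (mul_le_mul_of_nonneg_right hMle hκ) hγ0.le
    _ = γ * Rmax * (∑ n, q n * kappa (P n) Pbar) / (1 - γ) ^ 2 := by
        rw [← Finset.sum_div, ← Finset.mul_sum]
end

section
/- For any state s such that V̄^{π*}(s) ≥ V̄^{π*_I}(s), the value function of the imaginary MDP's optimal policy satisfies |V^{π*_I}_I(s) − V̄^{π*}(s)| ≤ γ R_max κ_1 / (1−γ)², where π* maximizes η(π) = E_{s₀∼μ}[V̄^π(s₀)] pointwise-average value, π*_I is the optimal policy of the imaginary MDP, V^π_I is the value in the imaginary MDP, and V̄^π = ∑_n q_n V^π_n. -/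
open Finset Filter

variable {S A : Type*}

variable [Fintype S] [Fintype A] [Nonempty S] [Nonempty A]

/-- A weighted average with nonneg weights summing to 1 of values whose abs is ≤ c has abs ≤ c. -/
lemma wavg_abs_bound {ι : Type*} [Fintype ι] (w : ι → ℝ) (hw0 : ∀ i, 0 ≤ w i)
    (hw1 : ∑ i, w i = 1) (x : ι → ℝ) (c : ℝ) (hx : ∀ i, |x i| ≤ c) :
    |∑ i, w i * x i| ≤ c := by
  calc |∑ i, w i * x i| ≤ ∑ i, |w i * x i| := Finset.abs_sum_le_sum_abs _ _
    _ = ∑ i, w i * |x i| := by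
        refine Finset.sum_congr rfl fun i _ => ?_
        rw [abs_mul, abs_of_nonneg (hw0 i)]
    _ ≤ ∑ i, w i * c := Finset.sum_le_sum fun i _ =>
        mul_le_mul_of_nonneg_left (hx i) (hw0 i)
    _ = c := by rw [← Finset.sum_mul, hw1, one_mul]

/-- Weighted average bound without abs. -/
lemma wavg_le_bound {ι : Type*} [Fintype ι] (w : ι → ℝ) (hw0 : ∀ i, 0 ≤ w i)
    (hw1 : ∑ i, w i = 1) (x : ι → ℝ) (c : ℝ) (hx : ∀ i, x i ≤ c) :
    ∑ i, w i * x i ≤ c := by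
  calc ∑ i, w i * x i ≤ ∑ i, w i * c := Finset.sum_le_sum fun i _ =>
        mul_le_mul_of_nonneg_left (hx i) (hw0 i)
    _ = c := by rw [← Finset.sum_mul, hw1, one_mul]

/-- Contraction estimate for finite sup. -/
lemma sup_contr (γ c : ℝ) (hγ1 : γ < 1) (f : S → ℝ)
    (h : ∀ s, f s ≤ c + γ * Finset.univ.sup' Finset.univ_nonempty f) :
    Finset.univ.sup' Finset.univ_nonempty f ≤ c / (1 - γ) := by
  set M := Finset.univ.sup' Finset.univ_nonempty f with hM
  have h1 : M ≤ c + γ * M := Finset.sup'_le _ _ fun s _ => h s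
  rw [le_div_iff₀ (by linarith : (0:ℝ) < 1 - γ)]
  nlinarith

/-- Rewriting of the policy Bellman operator via the induced state kernel. -/
lemma tpol_eq (γ : ℝ) (R : S → A → ℝ) (P : S → A → S → ℝ) (pi : S → A → ℝ)
    (V : S → ℝ) (s : S) :
    Tpol γ R P pi V s =
      (∑ a, pi s a * R s a) + γ * ∑ s', (∑ a, pi s a * P s a s') * V s' := by
  unfold Tpol
  have h : ∑ s', (∑ a, pi s a * P s a s') * V s' =
      ∑ a, pi s a * ∑ s', P s a s' * V s' := by
    simp_rw [Finset.sum_mul, Finset.mul_sum]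
    rw [Finset.sum_comm]
    exact Finset.sum_congr rfl fun a _ => Finset.sum_congr rfl fun s' _ => by ring
  rw [h, Finset.mul_sum, ← Finset.sum_add_distrib]
  exact Finset.sum_congr rfl fun a _ => by ring

/-- Any fixed point of `T^π` is bounded by `Rmax/(1-γ)`. -/
lemma val_bound (γ Rmax : ℝ) (hγ0 : 0 < γ) (hγ1 : γ < 1)
    (R : S → A → ℝ) (hR : ∀ s a, 0 ≤ R s a ∧ R s a ≤ Rmax)
    (P2 : S → A → S → ℝ) (hP2 : IsKernel P2)
    (pi : S → A → ℝ) (hpi : IsPolicy pi)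
    (U : S → ℝ) (hU : ∀ s, U s = Tpol γ R P2 pi U s) :
    ∀ s, |U s| ≤ Rmax / (1 - γ) := by
  have key : Finset.univ.sup' Finset.univ_nonempty (fun s => |U s|) ≤ Rmax / (1 - γ) := by
    apply sup_contr γ Rmax hγ1
    intro s
    set M := Finset.univ.sup' Finset.univ_nonempty (fun s => |U s|) with hMdef
    have hMb : ∀ s', |U s'| ≤ M := fun s' => Finset.le_sup' (fun s => |U s|) (Finset.mem_univ s')
    rw [hU s]
    unfold Tpol
    refine wavg_abs_bound _ (hpi.1 s) (hpi.2 s) _ _ ?_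
    intro a
    have h1 : |∑ s', P2 s a s' * U s'| ≤ M :=
      wavg_abs_bound _ (fun s' => hP2.1 s a s') (hP2.2 s a) _ _ hMb
    have h2 : |R s a| ≤ Rmax := by
      rw [abs_of_nonneg (hR s a).1]; exact (hR s a).2
    calc |R s a + γ * ∑ s', P2 s a s' * U s'|
        ≤ |R s a| + |γ * ∑ s', P2 s a s' * U s'| := abs_add_le _ _
      _ ≤ Rmax + γ * M := by
          rw [abs_mul, abs_of_pos hγ0]
          exact add_le_add h2 (mul_le_mul_of_nonneg_left h1 hγ0.le)
  intro s
  exact le_trans (Finset.le_sup' (fun s => |U s|) (Finset.mem_univ s)) key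

/-- Induced-kernel ℓ¹ distance is bounded by kappa. -/
lemma l1_le_kappa (P1 P2 : S → A → S → ℝ) (hP1 : IsKernel P1) (hP2 : IsKernel P2)
    (pi : S → A → ℝ) (hpi : IsPolicy pi) (s : S) :
    ∑ s', |(∑ a, pi s a * P1 s a s') - ∑ a, pi s a * P2 s a s'| ≤ kappa P1 P2 := by
  apply le_csSup
  · refine ⟨2, ?_⟩
    rintro x ⟨pi', s₀, hpi', rfl⟩
    have hQ : ∀ (P : S → A → S → ℝ), IsKernel P →
        (∀ s', 0 ≤ ∑ a, pi' s₀ a * P s₀ a s') ∧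
        ∑ s', ∑ a, pi' s₀ a * P s₀ a s' = 1 := by
      intro P hPk
      constructor
      · intro s'
        exact Finset.sum_nonneg fun a _ => mul_nonneg (hpi'.1 s₀ a) (hPk.1 s₀ a s')
      · rw [Finset.sum_comm]
        calc ∑ a, ∑ s', pi' s₀ a * P s₀ a s'
            = ∑ a, pi' s₀ a * ∑ s', P s₀ a s' := by
              refine Finset.sum_congr rfl fun a _ => ?_; rw [Finset.mul_sum]
          _ = ∑ a, pi' s₀ a := by
              refine Finset.sum_congr rfl fun a _ => ?_; rw [hPk.2 s₀ a, mul_one]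
          _ = 1 := hpi'.2 s₀
    have h1 := hQ P1 hP1
    have h2 := hQ P2 hP2
    calc ∑ s', |(∑ a, pi' s₀ a * P1 s₀ a s') - ∑ a, pi' s₀ a * P2 s₀ a s'|
        ≤ ∑ s', ((∑ a, pi' s₀ a * P1 s₀ a s') + ∑ a, pi' s₀ a * P2 s₀ a s') := by
          refine Finset.sum_le_sum fun s' _ => ?_
          calc |(∑ a, pi' s₀ a * P1 s₀ a s') - ∑ a, pi' s₀ a * P2 s₀ a s'|
              ≤ |∑ a, pi' s₀ a * P1 s₀ a s'| + |∑ a, pi' s₀ a * P2 s₀ a s'| := abs_sub _ _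
            _ = (∑ a, pi' s₀ a * P1 s₀ a s') + ∑ a, pi' s₀ a * P2 s₀ a s' := by
                rw [abs_of_nonneg (h1.1 s'), abs_of_nonneg (h2.1 s')]
      _ = 2 := by rw [Finset.sum_add_distrib, h1.2, h2.2]; norm_num
  · exact ⟨pi, s, hpi, rfl⟩

lemma kappa_nonneg (P1 P2 : S → A → S → ℝ) (hP1 : IsKernel P1) (hP2 : IsKernel P2)
    (pi : S → A → ℝ) (hpi : IsPolicy pi) : 0 ≤ kappa P1 P2 := by
  obtain ⟨s⟩ := (inferInstance : Nonempty S)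
  refine le_trans ?_ (l1_le_kappa P1 P2 hP1 hP2 pi hpi s)
  exact Finset.sum_nonneg fun s' _ => abs_nonneg _

/-- Simulation lemma: values of the same policy in two MDPs. -/
lemma sim_lemma (γ Rmax : ℝ) (hγ0 : 0 < γ) (hγ1 : γ < 1)
    (R : S → A → ℝ) (hR : ∀ s a, 0 ≤ R s a ∧ R s a ≤ Rmax)
    (P1 P2 : S → A → S → ℝ) (hP1 : IsKernel P1) (hP2 : IsKernel P2)
    (pi : S → A → ℝ) (hpi : IsPolicy pi)
    (W U : S → ℝ) (hW : ∀ s, W s = Tpol γ R P1 pi W s)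
    (hU : ∀ s, U s = Tpol γ R P2 pi U s) :
    ∀ s, |W s - U s| ≤ γ * Rmax * kappa P1 P2 / (1 - γ) ^ 2 := by
  set κ := kappa P1 P2 with hκdef
  have hκ0 : 0 ≤ κ := kappa_nonneg P1 P2 hP1 hP2 pi hpi
  set MU := Finset.univ.sup' Finset.univ_nonempty (fun s => |U s|) with hMU
  have hMUb : ∀ s', |U s'| ≤ MU := fun s' => Finset.le_sup' (fun s => |U s|) (Finset.mem_univ s')
  have hMU0 : 0 ≤ MU := le_trans (abs_nonneg _) (hMUb (Classical.arbitrary S))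
  have hMUR : MU ≤ Rmax / (1 - γ) :=
    Finset.sup'_le _ _ fun s _ => val_bound γ Rmax hγ0 hγ1 R hR P2 hP2 pi hpi U hU s
  -- induced kernels
  have hQ1 : ∀ s, (∀ s', 0 ≤ ∑ a, pi s a * P1 s a s') ∧
      ∑ s', ∑ a, pi s a * P1 s a s' = 1 := by
    intro s
    constructor
    · intro s'; exact Finset.sum_nonneg fun a _ => mul_nonneg (hpi.1 s a) (hP1.1 s a s')
    · rw [Finset.sum_comm]
      calc ∑ a, ∑ s', pi s a * P1 s a s'
          = ∑ a, pi s a * ∑ s', P1 s a s' := by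
            refine Finset.sum_congr rfl fun a _ => ?_; rw [Finset.mul_sum]
        _ = ∑ a, pi s a := by
            refine Finset.sum_congr rfl fun a _ => ?_; rw [hP1.2 s a, mul_one]
        _ = 1 := hpi.2 s
  -- key pointwise estimate
  set MD := Finset.univ.sup' Finset.univ_nonempty (fun s => |W s - U s|) with hMD
  have hMDb : ∀ s', |W s' - U s'| ≤ MD := fun s' => Finset.le_sup' (fun s => |W s - U s|) (Finset.mem_univ s')
  have hstep : ∀ s, |W s - U s| ≤ γ * κ * MU + γ * MD := by
    intro s
    have hdiff : W s - U s =
        γ * ((∑ s', (∑ a, pi s a * P1 s a s') * (W s' - U s')) +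
          ∑ s', ((∑ a, pi s a * P1 s a s') - ∑ a, pi s a * P2 s a s') * U s') := by
      rw [hW s, hU s, tpol_eq, tpol_eq]
      have : (∑ s', (∑ a, pi s a * P1 s a s') * (W s' - U s')) +
          ∑ s', ((∑ a, pi s a * P1 s a s') - ∑ a, pi s a * P2 s a s') * U s' =
          (∑ s', (∑ a, pi s a * P1 s a s') * W s') -
          ∑ s', (∑ a, pi s a * P2 s a s') * U s' := by
        rw [← Finset.sum_add_distrib, ← Finset.sum_sub_distrib]
        refine Finset.sum_congr rfl fun s' _ => ?_; ring
      rw [this]; ring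
    rw [hdiff, abs_mul, abs_of_pos hγ0]
    have h1 : |∑ s', (∑ a, pi s a * P1 s a s') * (W s' - U s')| ≤ MD :=
      wavg_abs_bound _ (hQ1 s).1 (hQ1 s).2 _ _ hMDb
    have h2 : |∑ s', ((∑ a, pi s a * P1 s a s') - ∑ a, pi s a * P2 s a s') * U s'| ≤
        κ * MU := by
      calc |∑ s', ((∑ a, pi s a * P1 s a s') - ∑ a, pi s a * P2 s a s') * U s'|
          ≤ ∑ s', |((∑ a, pi s a * P1 s a s') - ∑ a, pi s a * P2 s a s') * U s'| :=
            Finset.abs_sum_le_sum_abs _ _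
        _ ≤ ∑ s', |(∑ a, pi s a * P1 s a s') - ∑ a, pi s a * P2 s a s'| * MU := by
            refine Finset.sum_le_sum fun s' _ => ?_
            rw [abs_mul]
            exact mul_le_mul_of_nonneg_left (hMUb s') (abs_nonneg _)
        _ = (∑ s', |(∑ a, pi s a * P1 s a s') - ∑ a, pi s a * P2 s a s'|) * MU := by
            rw [Finset.sum_mul]
        _ ≤ κ * MU :=
            mul_le_mul_of_nonneg_right (l1_le_kappa P1 P2 hP1 hP2 pi hpi s) hMU0
    calc γ * |(∑ s', (∑ a, pi s a * P1 s a s') * (W s' - U s')) +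
          ∑ s', ((∑ a, pi s a * P1 s a s') - ∑ a, pi s a * P2 s a s') * U s'|
        ≤ γ * (MD + κ * MU) := by
          refine mul_le_mul_of_nonneg_left ?_ hγ0.le
          exact le_trans (abs_add_le _ _) (add_le_add h1 h2)
      _ = γ * κ * MU + γ * MD := by ring
  have hMDle : MD ≤ γ * κ * MU / (1 - γ) := by
    apply sup_contr γ (γ * κ * MU) hγ1
    intro s; exact hstep s
  intro s
  have h1γ : (0:ℝ) < 1 - γ := by linarith
  calc |W s - U s| ≤ MD := hMDb s
    _ ≤ γ * κ * MU / (1 - γ) := hMDle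
    _ ≤ γ * κ * (Rmax / (1 - γ)) / (1 - γ) := by
        have hnum : γ * κ * MU ≤ γ * κ * (Rmax / (1 - γ)) :=
          mul_le_mul_of_nonneg_left hMUR (mul_nonneg hγ0.le hκ0)
        exact div_le_div_of_nonneg_right hnum h1γ.le
    _ = γ * Rmax * κ / (1 - γ) ^ 2 := by field_simp

/-- Existence of a fixed point of `T^π` via the Banach fixed point theorem. -/
lemma exists_fixed (γ : ℝ) (hγ0 : 0 < γ) (hγ1 : γ < 1) (R : S → A → ℝ)
    (P2 : S → A → S → ℝ) (hP2 : IsKernel P2) (pi : S → A → ℝ) (hpi : IsPolicy pi) :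
    ∃ U : S → ℝ, ∀ s, U s = Tpol γ R P2 pi U s := by
  set F : (S → ℝ) → (S → ℝ) := fun V s => Tpol γ R P2 pi V s with hF
  have hLip : LipschitzWith γ.toNNReal F := by
    apply LipschitzWith.of_dist_le_mul
    intro V V'
    have hcoe : (γ.toNNReal : ℝ) = γ := Real.coe_toNNReal γ hγ0.le
    rw [hcoe]
    rw [dist_pi_le_iff (mul_nonneg hγ0.le dist_nonneg)]
    intro s
    rw [Real.dist_eq]
    have hdiff : F V s - F V' s =
        γ * ∑ s', (∑ a, pi s a * P2 s a s') * (V s' - V' s') := by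
      simp only [hF]
      rw [tpol_eq, tpol_eq]
      have he : ∑ s', (∑ a, pi s a * P2 s a s') * (V s' - V' s') =
          (∑ s', (∑ a, pi s a * P2 s a s') * V s') -
          ∑ s', (∑ a, pi s a * P2 s a s') * V' s' := by
        rw [← Finset.sum_sub_distrib]
        exact Finset.sum_congr rfl fun s' _ => by ring
      rw [he]; ring
    have hQ2 : (∀ s', 0 ≤ ∑ a, pi s a * P2 s a s') ∧
        ∑ s', ∑ a, pi s a * P2 s a s' = 1 := by
      constructor
      · intro s'; exact Finset.sum_nonneg fun a _ => mul_nonneg (hpi.1 s a) (hP2.1 s a s')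
      · rw [Finset.sum_comm]
        calc ∑ a, ∑ s', pi s a * P2 s a s'
            = ∑ a, pi s a * ∑ s', P2 s a s' := by
              refine Finset.sum_congr rfl fun a _ => ?_; rw [Finset.mul_sum]
          _ = ∑ a, pi s a := by
              refine Finset.sum_congr rfl fun a _ => ?_; rw [hP2.2 s a, mul_one]
          _ = 1 := hpi.2 s
    rw [hdiff, abs_mul, abs_of_pos hγ0]
    refine mul_le_mul_of_nonneg_left ?_ hγ0.le
    refine wavg_abs_bound _ hQ2.1 hQ2.2 _ _ ?_
    intro s'
    calc |V s' - V' s'| = dist (V s') (V' s') := (Real.dist_eq _ _).symm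
      _ ≤ dist V V' := dist_le_pi_dist V V' s'
  have hContr : ContractingWith γ.toNNReal F := by
    refine ⟨?_, hLip⟩
    have : (γ.toNNReal : ℝ) < 1 := by
      rw [Real.coe_toNNReal γ hγ0.le]; exact hγ1
    exact_mod_cast this
  refine ⟨hContr.fixedPoint F, ?_⟩
  intro s
  exact (congrFun hContr.fixedPoint_isFixedPt s).symm

/-- A fixed point of `T^π` under a kernel is dominated by the optimal value of that kernel. -/
lemma subopt (γ : ℝ) (hγ0 : 0 < γ) (hγ1 : γ < 1) (R : S → A → ℝ)
    (Pb : S → A → S → ℝ) (hPb : IsKernel Pb) (pi : S → A → ℝ) (hpi : IsPolicy pi)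
    (U V : S → ℝ) (hU : ∀ s, U s = Tpol γ R Pb pi U s)
    (hV : ∀ s, V s = Topt γ R Pb V s) : ∀ s, U s ≤ V s := by
  have hQ : ∀ s, (∀ s', 0 ≤ ∑ a, pi s a * Pb s a s') ∧
      ∑ s', ∑ a, pi s a * Pb s a s' = 1 := by
    intro s
    constructor
    · intro s'; exact Finset.sum_nonneg fun a _ => mul_nonneg (hpi.1 s a) (hPb.1 s a s')
    · rw [Finset.sum_comm]
      calc ∑ a, ∑ s', pi s a * Pb s a s'
          = ∑ a, pi s a * ∑ s', Pb s a s' := by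
            refine Finset.sum_congr rfl fun a _ => ?_; rw [Finset.mul_sum]
        _ = ∑ a, pi s a := by
            refine Finset.sum_congr rfl fun a _ => ?_; rw [hPb.2 s a, mul_one]
        _ = 1 := hpi.2 s
  have hTle : ∀ s, Tpol γ R Pb pi V s ≤ V s := by
    intro s
    conv_rhs => rw [hV s]
    unfold Tpol Topt
    refine wavg_le_bound _ (hpi.1 s) (hpi.2 s) _ _ ?_
    intro a
    exact Finset.le_sup' (fun a => R s a + γ * ∑ s', Pb s a s' * V s') (Finset.mem_univ a)
  set MX := Finset.univ.sup' Finset.univ_nonempty (fun s => U s - V s) with hMX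
  have hMXb : ∀ s', U s' - V s' ≤ MX :=
    fun s' => Finset.le_sup' (fun s => U s - V s) (Finset.mem_univ s')
  have hkey : MX ≤ 0 / (1 - γ) := by
    apply sup_contr γ 0 hγ1
    intro s
    rw [zero_add]
    have h1 : U s - V s ≤ Tpol γ R Pb pi U s - Tpol γ R Pb pi V s := by
      have := hTle s
      rw [hU s] at *
      linarith
    have h2 : Tpol γ R Pb pi U s - Tpol γ R Pb pi V s =
        γ * ∑ s', (∑ a, pi s a * Pb s a s') * (U s' - V s') := by
      rw [tpol_eq, tpol_eq]
      have he : ∑ s', (∑ a, pi s a * Pb s a s') * (U s' - V s') =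
          (∑ s', (∑ a, pi s a * Pb s a s') * U s') -
          ∑ s', (∑ a, pi s a * Pb s a s') * V s' := by
        rw [← Finset.sum_sub_distrib]
        exact Finset.sum_congr rfl fun s' _ => by ring
      rw [he]; ring
    have h3 : ∑ s', (∑ a, pi s a * Pb s a s') * (U s' - V s') ≤ MX :=
      wavg_le_bound _ (hQ s).1 (hQ s).2 _ _ hMXb
    calc U s - V s ≤ γ * ∑ s', (∑ a, pi s a * Pb s a s') * (U s' - V s') := by
          rw [← h2]; exact h1
      _ ≤ γ * MX := mul_le_mul_of_nonneg_left h3 hγ0.le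
  intro s
  have := hMXb s
  rw [zero_div] at hkey
  linarith

theorem stmt15 (N : ℕ) (γ Rmax : ℝ) (hγ0 : 0 < γ) (hγ1 : γ < 1)
    (R : S → A → ℝ) (hR : ∀ s a, 0 ≤ R s a ∧ R s a ≤ Rmax)
    (q : Fin N → ℝ) (hq0 : ∀ n, 0 ≤ q n) (hq1 : ∑ n, q n = 1)
    (P : Fin N → S → A → S → ℝ) (hP : ∀ n, IsKernel (P n))
    (Pbar : S → A → S → ℝ) (hPbar : ∀ s a s', Pbar s a s' = ∑ j, q j * P j s a s')
    (μ : S → ℝ) (hμ0 : ∀ s, 0 ≤ μ s) (hμ1 : ∑ s, μ s = 1)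
    -- π*, the optimal policy for the FRL objective η(π) = E_{s₀∼μ}[V̄^π(s₀)]
    (pistar : S → A → ℝ) (hpistar : IsPolicy pistar)
    (Vstarn : Fin N → S → ℝ)
    (hVstarn : ∀ n s, Vstarn n s = Tpol γ R (P n) pistar (Vstarn n) s)
    (hopt : ∀ pi' : S → A → ℝ, IsPolicy pi' → ∀ W : Fin N → S → ℝ,
      (∀ n s, W n s = Tpol γ R (P n) pi' (W n) s) →
      ∑ s, μ s * ∑ n, q n * W n s ≤ ∑ s, μ s * ∑ n, q n * Vstarn n s)
    -- π*_I, the optimal policy of the imaginary MDP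
    (pistarI : S → A → ℝ) (hpistarI : IsPolicy pistarI)
    (VIstar : S → ℝ) (hVIstar : ∀ s, VIstar s = Tpol γ R Pbar pistarI VIstar s)
    (hVIstarOpt : ∀ s, VIstar s = Topt γ R Pbar VIstar s)
    (VstarIn : Fin N → S → ℝ)
    (hVstarIn : ∀ n s, VstarIn n s = Tpol γ R (P n) pistarI (VstarIn n) s)
    (s : S) (hs : ∑ n, q n * VstarIn n s ≤ ∑ n, q n * Vstarn n s) :
    |VIstar s - ∑ n, q n * Vstarn n s| ≤
      γ * Rmax * (∑ n, q n * kappa (P n) Pbar) / (1 - γ) ^ 2 := by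
  have hPbarK : IsKernel Pbar := by
    constructor
    · intro t a t'
      rw [hPbar]
      exact Finset.sum_nonneg fun j _ => mul_nonneg (hq0 j) ((hP j).1 _ _ _)
    · intro t a
      simp_rw [hPbar]
      rw [Finset.sum_comm]
      calc ∑ j, ∑ t', q j * P j t a t' = ∑ j, q j * ∑ t', P j t a t' := by
            refine Finset.sum_congr rfl fun j _ => ?_; rw [Finset.mul_sum]
        _ = ∑ j, q j := by
            refine Finset.sum_congr rfl fun j _ => ?_; rw [(hP j).2, mul_one]
        _ = 1 := hq1
  set B : Fin N → ℝ := fun n => γ * Rmax * kappa (P n) Pbar / (1 - γ) ^ 2 with hB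
  have hsum : ∑ n, q n * B n =
      γ * Rmax * (∑ n, q n * kappa (P n) Pbar) / (1 - γ) ^ 2 := by
    rw [Finset.mul_sum, Finset.sum_div]
    refine Finset.sum_congr rfl fun n _ => ?_
    simp only [hB]; ring
  have hsim2 : ∀ n, ∀ t, |VstarIn n t - VIstar t| ≤ B n := fun n =>
    sim_lemma γ Rmax hγ0 hγ1 R hR (P n) Pbar (hP n) hPbarK pistarI hpistarI _ _
      (hVstarIn n) hVIstar
  obtain ⟨U, hU⟩ := exists_fixed γ hγ0 hγ1 R Pbar hPbarK pistar hpistar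
  have hsim1 : ∀ n, ∀ t, |Vstarn n t - U t| ≤ B n := fun n =>
    sim_lemma γ Rmax hγ0 hγ1 R hR (P n) Pbar (hP n) hPbarK pistar hpistar _ _
      (hVstarn n) hU
  have hUle : U s ≤ VIstar s :=
    subopt γ hγ0 hγ1 R Pbar hPbarK pistar hpistar U VIstar hU hVIstarOpt s
  rw [abs_le, ← hsum]
  constructor
  · -- lower bound: ∑ q Vstarn s - VIstar s ≤ ∑ q B, via U ≤ VIstar
    have h1 : ∑ n, q n * (Vstarn n s - U s) = (∑ n, q n * Vstarn n s) - U s := by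
      simp_rw [mul_sub]
      rw [Finset.sum_sub_distrib, ← Finset.sum_mul, hq1, one_mul]
    have h2 : ∑ n, q n * (Vstarn n s - U s) ≤ ∑ n, q n * B n :=
      Finset.sum_le_sum fun n _ =>
        mul_le_mul_of_nonneg_left (le_trans (le_abs_self _) (hsim1 n s)) (hq0 n)
    rw [h1] at h2
    linarith
  · -- upper bound: VIstar s - ∑ q Vstarn s ≤ VIstar s - ∑ q VstarIn s ≤ ∑ q B
    have h1 : ∑ n, q n * (VIstar s - VstarIn n s) = VIstar s - ∑ n, q n * VstarIn n s := by
      simp_rw [mul_sub]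
      rw [Finset.sum_sub_distrib, ← Finset.sum_mul, hq1, one_mul]
    have h2 : ∑ n, q n * (VIstar s - VstarIn n s) ≤ ∑ n, q n * B n := by
      refine Finset.sum_le_sum fun n _ => mul_le_mul_of_nonneg_left ?_ (hq0 n)
      calc VIstar s - VstarIn n s ≤ |VIstar s - VstarIn n s| := le_abs_self _
        _ = |VstarIn n s - VIstar s| := abs_sub_comm _ _
        _ ≤ B n := hsim2 n s
    rw [h1] at h2
    linarith
end
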